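/- A non-trivial free product G = A * B with A non-trivial finite or infinite and B infinite cyclic is icc provided |A| ≥ 2: every conjugacy class of a non-identity element of A * B is infinite. -/

import Mathlib

open Monoid CoprodI

section Aux

variable {ι : Type*} {G : ι → Type*} [∀ i, Group (G i)]

private def wprod (l : List (Σ i, G i)) : CoprodI G :=
  (l.map fun p => CoprodI.of p.snd).prod

private lemma wprod_nil : wprod ([] : List (Σ i, G i)) = 1 := rfl

private lemma wprod_cons (p : Σ i, G i) (l : List (Σ i, G i)) :
    wprod (p :: l) = CoprodI.of p.snd * wprod l := by
  simp [wprod]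

private lemma wprod_append (l₁ l₂ : List (Σ i, G i)) :
    wprod (l₁ ++ l₂) = wprod l₁ * wprod l₂ := by
  simp [wprod]

private lemma wprod_singleton (p : Σ i, G i) :
    wprod [p] = CoprodI.of p.snd := by
  simp [wprod]

/-- The "reversed inverse" of a word. -/
private def winv (l : List (Σ i, G i)) : List (Σ i, G i) :=
  (l.map fun p => ⟨p.fst, p.snd⁻¹⟩).reverse

private lemma winv_concat (l : List (Σ i, G i)) (p : Σ i, G i) :
    winv (l ++ [p]) = ⟨p.fst, p.snd⁻¹⟩ :: winv l := by
  simp [winv]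

private lemma wprod_winv (l : List (Σ i, G i)) : wprod (winv l) = (wprod l)⁻¹ := by
  induction l with
  | nil => simp [winv, wprod]
  | cons p l ih =>
      have : winv (p :: l) = winv l ++ [⟨p.fst, p.snd⁻¹⟩] := by simp [winv]
      rw [this, wprod_append, wprod_singleton, wprod_cons, ih, mul_inv_rev]
      simp

private lemma winv_ne_one {l : List (Σ i, G i)} (h : ∀ p ∈ l, p.snd ≠ 1) :
    ∀ p ∈ winv l, p.snd ≠ 1 := by
  intro p hp
  rw [winv, List.mem_reverse, List.mem_map] at hp
  obtain ⟨q, hq, rfl⟩ := hp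
  simpa using h q hq

private lemma winv_chain' {l : List (Σ i, G i)}
    (h : l.Chain' fun p q => p.fst ≠ q.fst) :
    (winv l).Chain' fun p q => p.fst ≠ q.fst := by
  unfold List.Chain' at h ⊢
  rw [winv, List.isChain_reverse, List.isChain_map]
  exact h.imp fun a b hab => Ne.symm hab

/-- Words with distinct letter-lists give distinct elements (injectivity of `Word.prod`). -/
private lemma wprod_inj {l₁ l₂ : List (Σ i, G i)}
    (h₁ : ∀ p ∈ l₁, p.snd ≠ 1) (h₁' : l₁.Chain' fun p q => p.fst ≠ q.fst)
    (h₂ : ∀ p ∈ l₂, p.snd ≠ 1) (h₂' : l₂.Chain' fun p q => p.fst ≠ q.fst)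
    (h : wprod l₁ = wprod l₂) : l₁ = l₂ := by
  classical
  have hprodinj : Function.Injective (Word.prod : Word G → CoprodI G) := by
    intro w₁ w₂ hw
    have : Word.equiv.symm w₁ = Word.equiv.symm w₂ := hw
    exact Word.equiv.symm.injective this
  have : (⟨l₁, h₁, h₁'⟩ : Word G) = ⟨l₂, h₂, h₂'⟩ := hprodinj h
  exact congrArg Word.toList this

private lemma of_ne_one {i : ι} {m : G i} (hm : m ≠ 1) : (CoprodI.of m : CoprodI G) ≠ 1 := by
  intro h
  have : ([⟨i, m⟩] : List (Σ i, G i)) = [] := by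
    refine wprod_inj ?_ ?_ ?_ ?_ ?_ <;>
      simp [wprod_singleton, wprod_nil, hm, h, List.Chain']
  simp at this

private lemma of_cross_ne {i j : ι} (hij : i ≠ j) {m : G i} (hm : m ≠ 1) (n : G j) :
    (CoprodI.of m : CoprodI G) ≠ CoprodI.of n := by
  intro h
  by_cases hn : n = 1
  · exact of_ne_one hm (by rw [h, hn, map_one])
  · have : ([⟨i, m⟩] : List (Σ i, G i)) = [⟨j, n⟩] := by
      refine wprod_inj ?_ ?_ ?_ ?_ ?_ <;>
        simp [wprod_singleton, hm, hn, h, List.Chain']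
    simp at this
    exact hij this.1

/-- Malnormality-type lemma: if `g` conjugates a nontrivial element of the factor `G iB`
into the factor `G iB`, then `g` itself lies in the factor `G iB`. -/
private lemma lemM_aux {iB : ι} :
    ∀ (l : List (Σ i, G i)), (∀ p ∈ l, p.snd ≠ 1) → (l.Chain' fun p q => p.fst ≠ q.fst) →
      ∀ β β' : G iB, β ≠ 1 → wprod l * CoprodI.of β * (wprod l)⁻¹ = CoprodI.of β' →
        ∃ γ : G iB, CoprodI.of γ = wprod l := by
  intro l
  induction l using List.reverseRecOn with
  | nil =>
      intro _ _ β β' hβ _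
      exact ⟨1, by simp [wprod_nil]⟩
  | append_singleton l p ih =>
      intro h1 h2 β β' hβ heq
      obtain ⟨j, x⟩ := p
      have hx : x ≠ 1 := h1 ⟨j, x⟩ (by simp)
      have hl1 : ∀ p ∈ l, p.snd ≠ 1 := fun p hp => h1 p (by simp [hp])
      have hl2 : l.Chain' fun p q => p.fst ≠ q.fst := (List.isChain_append.mp h2).1
      by_cases hip : j = iB
      · subst hip
        have heq' : wprod l * CoprodI.of (x * β * x⁻¹) * (wprod l)⁻¹ = CoprodI.of β' := by
          rw [← heq, wprod_append, wprod_singleton]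
          simp only [map_mul, map_inv, mul_inv_rev]
          group
        have hβ2 : x * β * x⁻¹ ≠ 1 := by
          intro h
          apply hβ
          have := congrArg (fun y => x⁻¹ * y * x) h
          simpa [mul_assoc] using this
        obtain ⟨γ, hγ⟩ := ih hl1 hl2 (x * β * x⁻¹) β' hβ2 heq'
        refine ⟨γ * x, ?_⟩
        rw [map_mul, hγ, wprod_append, wprod_singleton]
      · -- contradiction: the conjugate has a long reduced word
        exfalso
        set q : (Σ i, G i) := ⟨j, x⟩ with hq
        set L : List (Σ i, G i) := (l ++ [q]) ++ ⟨iB, β⟩ :: ⟨j, x⁻¹⟩ :: winv l with hL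
        have htail : (⟨j, x⁻¹⟩ :: winv l : List (Σ i, G i)) = winv (l ++ [q]) := by
          rw [winv_concat]
        have hLprod : wprod L = CoprodI.of β' := by
          rw [hL, wprod_append, wprod_cons, htail, wprod_winv, ← mul_assoc, ← heq]
        have hLne : ∀ p ∈ L, p.snd ≠ 1 := by
          intro p hp
          rw [hL] at hp
          rcases List.mem_append.mp hp with hp | hp
          · exact h1 p hp
          · rcases hp with _ | ⟨_, hp⟩
            · exact hβ
            · rcases hp with _ | ⟨_, hp⟩
              · simpa using hx
              · exact winv_ne_one hl1 p hp
        have hLchain : L.Chain' fun p q => p.fst ≠ q.fst := by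
          rw [hL]
          refine List.isChain_append.mpr ⟨h2, ?_, ?_⟩
          · rw [List.isChain_cons_cons, htail]
            exact ⟨Ne.symm hip, winv_chain' h2⟩
          · intro a ha b hb
            rw [List.getLast?_concat] at ha
            simp only [List.head?_cons, Option.mem_some_iff] at ha hb
            subst ha; subst hb
            exact hip
        have hβ' : β' ≠ 1 := by
          intro h
          rw [h, map_one] at heq
          have : CoprodI.of β = (1 : CoprodI G) := by
            have := congrArg (fun y => (wprod (l ++ [q]))⁻¹ * y * wprod (l ++ [q])) heq
            simpa [mul_assoc] using this
          exact of_ne_one hβ this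
        have : L = [⟨iB, β'⟩] := by
          refine wprod_inj hLne hLchain ?_ ?_ ?_ <;>
            simp [hβ', hLprod, wprod_singleton, List.Chain']
        have hlen := congrArg List.length this
        rw [hL] at hlen
        simp [winv] at hlen
        omega

private lemma lemM {iB : ι} (g : CoprodI G) {β β' : G iB} (hβ : β ≠ 1)
    (h : g * CoprodI.of β * g⁻¹ = CoprodI.of β') : ∃ γ : G iB, CoprodI.of γ = g := by
  classical
  set w := Word.equiv g with hw
  have hg : wprod w.toList = g := by
    have : Word.equiv.symm (Word.equiv g) = g := Word.equiv.symm_apply_apply g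
    exact this
  rw [← hg] at h
  obtain ⟨γ, hγ⟩ := lemM_aux w.toList w.ne_one w.chain_ne β β' hβ h
  exact ⟨γ, hγ.trans hg⟩

/-- The key theorem, for `CoprodI`. -/
private lemma keyCoprodI {iA iB : ι} (hne : iA ≠ iB) (a : G iA) (ha : a ≠ 1)
    (b : G iB) (hinf : ∀ k : ℤ, k ≠ 0 → b ^ k ≠ 1) :
    ∀ g : CoprodI G, g ≠ 1 →
      {h : CoprodI G | ∃ x : CoprodI G, x * g * x⁻¹ = h}.Infinite := by
  intro g hg
  have dich : ∀ u : CoprodI G, (∃ k : ℤ, k ≠ 0 ∧ u ^ k * g = g * u ^ k) ∨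
      {h : CoprodI G | ∃ x : CoprodI G, x * g * x⁻¹ = h}.Infinite := by
    intro u
    by_cases hinj : Function.Injective (fun k : ℤ => u ^ k * g * (u ^ k)⁻¹)
    · right
      exact Set.infinite_of_injective_forall_mem hinj fun k => ⟨u ^ k, rfl⟩
    · left
      rw [Function.not_injective_iff] at hinj
      obtain ⟨k, m, h, hkm⟩ := hinj
      refine ⟨k - m, sub_ne_zero.2 hkm, ?_⟩
      have hks : u ^ k = u ^ m * u ^ (k - m) := by
        rw [← zpow_add]; ring_nf
      rw [hks] at h
      have h' : u ^ m * (u ^ (k - m) * g * (u ^ (k - m))⁻¹) * (u ^ m)⁻¹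
          = u ^ m * g * (u ^ m)⁻¹ := by
        rw [← h]; group
      have h2 : u ^ (k - m) * g * (u ^ (k - m))⁻¹ = g := by
        have h3 := congrArg (fun y => (u ^ m)⁻¹ * y * u ^ m) h'
        simpa [mul_assoc] using h3
      calc u ^ (k - m) * g = (u ^ (k - m) * g * (u ^ (k - m))⁻¹) * u ^ (k - m) := by group
        _ = g * u ^ (k - m) := by rw [h2]
  rcases dich (CoprodI.of b) with ⟨k, hk, hcomm⟩ | hfin
  swap
  · exact hfin
  have h1 : g * CoprodI.of (b ^ k) * g⁻¹ = CoprodI.of (b ^ k) := by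
    rw [map_zpow, ← hcomm]
    group
  obtain ⟨γ, hγ⟩ := lemM g (hinf k hk) h1
  have hγ1 : γ ≠ 1 := fun h => hg (by rw [← hγ, h, map_one])
  rcases dich (CoprodI.of a * CoprodI.of b * (CoprodI.of a)⁻¹) with ⟨m, hm, hcomm2⟩ | hfin
  swap
  · exact hfin
  set x : CoprodI G := CoprodI.of a with hxdef
  have hpow : (x * CoprodI.of b * x⁻¹) ^ m = x * CoprodI.of (b ^ m) * x⁻¹ := by
    rw [map_zpow]
    exact conj_zpow ..
  rw [hpow] at hcomm2
  have h2 : (x⁻¹ * g * x) * CoprodI.of (b ^ m) * (x⁻¹ * g * x)⁻¹ = CoprodI.of (b ^ m) := by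
    have hconj : g * (x * CoprodI.of (b ^ m) * x⁻¹) * g⁻¹ = x * CoprodI.of (b ^ m) * x⁻¹ := by
      rw [← hcomm2]; group
    calc (x⁻¹ * g * x) * CoprodI.of (b ^ m) * (x⁻¹ * g * x)⁻¹
        = x⁻¹ * (g * (x * CoprodI.of (b ^ m) * x⁻¹) * g⁻¹) * x := by group
      _ = x⁻¹ * (x * CoprodI.of (b ^ m) * x⁻¹) * x := by rw [hconj]
      _ = CoprodI.of (b ^ m) := by group
  obtain ⟨δ, hδ⟩ := lemM (x⁻¹ * g * x) (hinf m hm) h2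
  have h3 : (CoprodI.of a⁻¹ : CoprodI G) * CoprodI.of γ * (CoprodI.of a⁻¹)⁻¹ = CoprodI.of δ := by
    rw [map_inv, inv_inv, ← hxdef, hγ]
    exact hδ.symm
  obtain ⟨ε, hε⟩ := lemM (CoprodI.of a⁻¹ : CoprodI G) hγ1 h3
  exact absurd hε.symm (of_cross_ne hne (inv_ne_one.mpr ha) ε)

end Aux

section Transfer

universe u v

private def Fam (A : Type u) (B : Type v) : Bool → Type (max u v) :=
  fun i => match i with
  | true => ULift.{v} A
  | false => ULift.{u} B

private instance famGroup {A : Type u} {B : Type v} [Group A] [Group B] (i : Bool) :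
    Group (Fam A B i) :=
  match i with
  | true => (inferInstance : Group (ULift A))
  | false => (inferInstance : Group (ULift B))

private def toFam (A : Type u) (B : Type v) [Group A] [Group B] :
    Monoid.Coprod A B →* CoprodI (Fam A B) :=
  Coprod.lift
    ((CoprodI.of (M := Fam A B) (i := true)).comp (MulEquiv.ulift.symm : A ≃* ULift A).toMonoidHom)
    ((CoprodI.of (M := Fam A B) (i := false)).comp (MulEquiv.ulift.symm : B ≃* ULift B).toMonoidHom)

private def ofFam (A : Type u) (B : Type v) [Group A] [Group B] :
    CoprodI (Fam A B) →* Monoid.Coprod A B :=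
  CoprodI.lift fun i => match i with
  | true => Coprod.inl.comp (MulEquiv.ulift : ULift A ≃* A).toMonoidHom
  | false => Coprod.inr.comp (MulEquiv.ulift : ULift B ≃* B).toMonoidHom

private def famEquiv (A : Type u) (B : Type v) [Group A] [Group B] :
    Monoid.Coprod A B ≃* CoprodI (Fam A B) :=
  MonoidHom.toMulEquiv (toFam A B) (ofFam A B)
    (by
      apply Coprod.hom_ext <;> ext x <;> simp [toFam, ofFam] <;> rfl)
    (by
      apply CoprodI.ext_hom
      intro i
      cases i <;> ext x <;> simp [toFam, ofFam] <;> rfl)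

end Transfer

/-- A free product `Monoid.Coprod A B` with `|A| ≥ 2` and `B` infinite cyclic is icc: every
conjugacy class of a non-identity element is infinite. -/
theorem stmt18 {A B : Type*} [Group A] [Nontrivial A] [Group B]
    (b : B) (hb : ∀ x : B, x ∈ Subgroup.zpowers b) (hBinf : Infinite B) :
    ∀ g : Monoid.Coprod A B, g ≠ 1 → {h : Monoid.Coprod A B | ∃ x : Monoid.Coprod A B, x * g * x⁻¹ = h}.Infinite := by
  intro g hg
  obtain ⟨a₀, ha₀⟩ := exists_ne (1 : A)
  -- b has infinite order
  have hbord : ∀ k : ℤ, k ≠ 0 → b ^ k ≠ 1 := by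
    intro k hk h1
    have hfo : IsOfFinOrder b := by
      refine isOfFinOrder_iff_pow_eq_one.mpr ⟨k.natAbs, by positivity, ?_⟩
      have hz : b ^ ((k.natAbs : ℤ)) = 1 := by
        rcases Int.natAbs_eq k with h | h
        · rw [← h, h1]
        · rw [show ((k.natAbs : ℤ)) = -k by omega, zpow_neg, h1, inv_one]
      rw [← zpow_natCast, hz]
    have : Finite B := by
      have htop : Subgroup.zpowers b = ⊤ := by
        ext y; simpa using hb y
      have : Finite (Subgroup.zpowers b) := hfo.finite_zpowers
      rw [htop] at this
      exact Finite.of_equiv _ Subgroup.topEquiv.toEquiv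
    exact not_finite B
  set e := famEquiv A B with he
  have hbord' : ∀ k : ℤ, k ≠ 0 → (ULift.up b : Fam A B false) ^ k ≠ 1 := by
    intro k hk h1
    apply hbord k hk
    have := congrArg (MulEquiv.ulift : ULift B ≃* B) h1
    rw [map_zpow, map_one] at this
    exact this
  have ha' : (ULift.up a₀ : Fam A B true) ≠ 1 := by
    intro h
    exact ha₀ (congrArg ULift.down h)
  have hkey := keyCoprodI (G := Fam A B) (iA := true) (iB := false) (by simp)
    (ULift.up a₀) ha' (ULift.up b) hbord' (e g) (by simp [hg])
  have hsub : {h : CoprodI (Fam A B) | ∃ x, x * e g * x⁻¹ = h} ⊆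
      e '' {h : Monoid.Coprod A B | ∃ x, x * g * x⁻¹ = h} := by
    rintro h' ⟨x', rfl⟩
    exact ⟨e.symm x' * g * (e.symm x')⁻¹, ⟨e.symm x', rfl⟩, by simp⟩
  exact Set.Infinite.of_image e ((hkey.mono hsub))
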